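/- Let k ≥ 1 and let s = Σ_{j=1}^{N} f_j be a sum of continuous maps f_j: Δ^k → X whose image in the quotient complex S̄_k(X) = S_k(X)/S'_k(X) is a cycle. Then there exist a subset D ⊆ C × C of the index set C = {(j,p) : 1 ≤ j ≤ N, 0 ≤ p ≤ k} disjoint from the diagonal, and a map τ: D → Sym({0,...,k−1}), such that: (i) D is symmetric; (ii) each projection D → C is a bijection; (iii) for all ((j₁,p₁),(j₂,p₂)) ∈ D one has τ_{(j₂,p₂),(j₁,p₁)} = τ_{(j₁,p₁),(j₂,p₂)}^{-1}, f_{j₂} ∘ ι_{k,p₂} = f_{j₁} ∘ ι_{k,p₁} ∘ τ_{(j₁,p₁),(j₂,p₂)}, and sign(τ_{(j₁,p₁),(j₂,p₂)}) = −(−1)^{p₁+p₂}. -/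

import Mathlib

open scoped BigOperators
noncomputable section

/-- The standard `k`-simplex, in barycentric coordinates. -/
abbrev Δ (k : ℕ) : Type := ↥(stdSimplex ℝ (Fin (k+1)))

/-- The `p`-th face inclusion `Δ^k → Δ^{k+1}`. -/
def faceMap (k : ℕ) (p : Fin (k+2)) : C(Δ k, Δ (k+1)) where
  toFun x := ⟨fun j => ∑ i, if p.succAbove i = j then x.1 i else 0, by
    constructor
    · intro j
      refine Finset.sum_nonneg fun i _ => ?_
      by_cases h : p.succAbove i = j
      · simpa [h] using x.2.1 i
      · simp [h]
    · rw [Finset.sum_comm]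
      have h1 : ∀ i : Fin (k+1), (∑ j, if p.succAbove i = j then x.1 i else 0) = x.1 i := by
        intro i; simp
      simp_rw [h1]
      exact x.2.2⟩
  continuous_toFun := by
    apply Continuous.subtype_mk
    refine continuous_pi fun j => ?_
    refine continuous_finset_sum _ fun i _ => ?_
    by_cases h : p.succAbove i = j
    · simp only [if_pos h]
      exact (continuous_apply i).comp continuous_subtype_val
    · simpa [h] using continuous_const

/-- The affine action of a permutation of the vertices on the standard simplex. -/
def permMap (k : ℕ) (τ : Equiv.Perm (Fin (k+1))) : C(Δ k, Δ k) where
  toFun x := ⟨fun j => x.1 (τ⁻¹ j), by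
    refine ⟨fun j => x.2.1 _, ?_⟩
    rw [Equiv.sum_comp τ⁻¹ x.1]
    exact x.2.2⟩
  continuous_toFun := by
    apply Continuous.subtype_mk
    exact continuous_pi fun j => (continuous_apply _).comp continuous_subtype_val

/-- Singular `k`-chains with integer coefficients. -/
abbrev chain (X : Type) [TopologicalSpace X] (k : ℕ) : Type := FreeAbelianGroup C(Δ k, X)

/-- The singular boundary operator. -/
def bdry (X : Type) [TopologicalSpace X] (k : ℕ) : chain X (k+1) →+ chain X k :=
  ∑ p : Fin (k+2),
    ((-1 : ℤ)^(p : ℕ)) • FreeAbelianGroup.map (fun f : C(Δ (k+1), X) => f.comp (faceMap k p))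

/-- Cycles (in degree `0` every chain is a cycle). -/
def IsCycle (X : Type) [TopologicalSpace X] : ∀ k : ℕ, chain X k → Prop
  | 0, _ => True
  | (k+1), x => bdry X k x = 0

/-- The subgroup `S'_*(X)` generated by `f - sign τ • (f ∘ τ)`. -/
def Sprime (X : Type) [TopologicalSpace X] (k : ℕ) : AddSubgroup (chain X k) :=
  AddSubgroup.closure
    { x | ∃ (f : C(Δ k, X)) (τ : Equiv.Perm (Fin (k+1))),
        x = FreeAbelianGroup.of f
          - (Equiv.Perm.sign τ : ℤ) • FreeAbelianGroup.of (f.comp (permMap k τ)) }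

/-- Pushforward of chains along a continuous map. -/
def chainMap {X Y : Type} [TopologicalSpace X] [TopologicalSpace Y] (g : C(X, Y)) (k : ℕ) :
    chain X k →+ chain Y k :=
  FreeAbelianGroup.map fun f : C(Δ k, X) => g.comp f

end


noncomputable section FacePairingAux

open Equiv
open scoped Classical

variable {X : Type} [TopologicalSpace X] {k : ℕ}

lemma permMap_mul (σ τ : Equiv.Perm (Fin (k+1))) :
    permMap k (σ * τ) = (permMap k σ).comp (permMap k τ) := by
  ext x j
  rfl

/-- Right action of permutations on singular simplices. -/
def ract (g : C(Δ k, X)) (σ : Equiv.Perm (Fin (k+1))) : C(Δ k, X) :=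
  g.comp (permMap k σ)

lemma ract_ract (g : C(Δ k, X)) (σ τ : Equiv.Perm (Fin (k+1))) :
    ract (ract g σ) τ = ract g (σ * τ) := by
  rw [ract, ract, ract, ContinuousMap.comp_assoc, permMap_mul]

lemma ract_one (g : C(Δ k, X)) : ract g 1 = g := by
  ext x
  rfl

/-- Orbit relation. -/
def OrbRel (g h : C(Δ k, X)) : Prop := ∃ σ : Equiv.Perm (Fin (k+1)), h = ract g σ

lemma OrbRel.rfl (g : C(Δ k, X)) : OrbRel g g := ⟨1, (ract_one g).symm⟩

lemma OrbRel.symm {g h : C(Δ k, X)} : OrbRel g h → OrbRel h g := by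
  rintro ⟨σ, rfl⟩
  exact ⟨σ⁻¹, by rw [ract_ract, mul_inv_cancel, ract_one]⟩

lemma OrbRel.trans {g h l : C(Δ k, X)} : OrbRel g h → OrbRel h l → OrbRel g l := by
  rintro ⟨σ, rfl⟩ ⟨τ, rfl⟩
  exact ⟨σ * τ, (ract_ract g σ τ).symm⟩

/-- Orbit with an odd stabilizer element. -/
def OddOrb (g : C(Δ k, X)) : Prop :=
  ∃ σ : Equiv.Perm (Fin (k+1)), ract g σ = g ∧ Equiv.Perm.sign σ = -1

/-- Sign of an element of the orbit of `g` relative to `g` (0 outside the orbit). -/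
def eps (g h : C(Δ k, X)) : ℤ :=
  if hh : OrbRel g h then (Equiv.Perm.sign hh.choose : ℤ) else 0

lemma eps_of_not_rel {g h : C(Δ k, X)} (hr : ¬ OrbRel g h) : eps g h = 0 :=
  dif_neg hr

lemma eps_eq {g : C(Δ k, X)} (hg : ¬ OddOrb g) {h : C(Δ k, X)}
    {σ : Equiv.Perm (Fin (k+1))} (e : h = ract g σ) :
    eps g h = (Equiv.Perm.sign σ : ℤ) := by
  have hr : OrbRel g h := ⟨σ, e⟩
  rw [eps, dif_pos hr]
  have e' : h = ract g hr.choose := hr.choose_spec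
  set c := hr.choose with hc
  have hstab : ract g (c * σ⁻¹) = g := by
    have : ract g c = ract g σ := by rw [← e', ← e]
    calc ract g (c * σ⁻¹) = ract (ract g c) σ⁻¹ := by rw [ract_ract]
    _ = ract (ract g σ) σ⁻¹ := by rw [this]
    _ = g := by rw [ract_ract, mul_inv_cancel, ract_one]
  have hsgn : Equiv.Perm.sign (c * σ⁻¹) = 1 := by
    by_contra hne
    rcases Int.units_eq_one_or (Equiv.Perm.sign (c * σ⁻¹)) with h1 | h1
    · exact hne h1
    · exact hg ⟨c * σ⁻¹, hstab, h1⟩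
  have : Equiv.Perm.sign c = Equiv.Perm.sign σ := by
    have := congrArg (· * Equiv.Perm.sign σ) hsgn
    simpa [map_mul, map_inv, mul_assoc] using this
  rw [this]

lemma eps_pm {g : C(Δ k, X)} {h : C(Δ k, X)} (hr : OrbRel g h) :
    eps g h = 1 ∨ eps g h = -1 := by
  rw [eps, dif_pos hr]
  rcases Int.units_eq_one_or (Equiv.Perm.sign hr.choose) with h1 | h1 <;>
    simp [h1]

/-- The sign homomorphism attached to an orbit. -/
def phi (g : C(Δ k, X)) : chain X k →+ ℤ := FreeAbelianGroup.lift (eps g)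

lemma phi_sprime {g : C(Δ k, X)} (hg : ¬ OddOrb g) {x : chain X k}
    (hx : x ∈ Sprime X k) : phi g x = 0 := by
  have hle : Sprime X k ≤ (phi g).ker := by
    rw [Sprime, AddSubgroup.closure_le]
    rintro y ⟨f, τ, rfl⟩
    have : (f.comp (permMap k τ)) = ract f τ := rfl
    simp only [AddMonoidHom.mem_ker, SetLike.mem_coe, map_sub, map_zsmul, phi,
      FreeAbelianGroup.lift_apply_of, this]
    by_cases hr : OrbRel g f
    · obtain ⟨σ, rfl⟩ := hr
      rw [eps_eq hg (rfl : ract g σ = ract g σ), eps_eq hg (ract_ract g σ τ)]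
      rcases Int.units_eq_one_or (Equiv.Perm.sign τ) with h1 | h1 <;>
        simp [map_mul, h1]
    · have hr2 : ¬ OrbRel g (ract f τ) := fun hr2 => hr (hr2.trans ⟨τ⁻¹, by
        rw [ract_ract, mul_inv_cancel, ract_one]⟩)
      rw [eps_of_not_rel hr, eps_of_not_rel hr2]
      simp
  simpa [AddMonoidHom.mem_ker] using hle hx

/-- The mod-2 indicator homomorphism attached to an orbit. -/
def ind (g h : C(Δ k, X)) : ZMod 2 := if OrbRel g h then 1 else 0

def psi (g : C(Δ k, X)) : chain X k →+ ZMod 2 := FreeAbelianGroup.lift (ind g)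

lemma psi_sprime (g : C(Δ k, X)) {x : chain X k}
    (hx : x ∈ Sprime X k) : psi g x = 0 := by
  have hle : Sprime X k ≤ (psi g).ker := by
    rw [Sprime, AddSubgroup.closure_le]
    rintro y ⟨f, τ, rfl⟩
    have h0 : (f.comp (permMap k τ)) = ract f τ := rfl
    have hiff : OrbRel g f ↔ OrbRel g (ract f τ) :=
      ⟨fun hr => hr.trans ⟨τ, rfl⟩, fun hr => hr.trans ⟨τ⁻¹, by
        rw [ract_ract, mul_inv_cancel, ract_one]⟩⟩
    have hind : ind g f = ind g (ract f τ) := by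
      rw [ind, ind]
      by_cases hr : OrbRel g f
      · rw [if_pos hr, if_pos (hiff.1 hr)]
      · rw [if_neg hr, if_neg (fun hr2 => hr (hiff.2 hr2))]
    simp only [AddMonoidHom.mem_ker, SetLike.mem_coe, map_sub, map_zsmul, psi,
      FreeAbelianGroup.lift_apply_of, h0, ← hind]
    rcases Int.units_eq_one_or (Equiv.Perm.sign τ) with h1 | h1 <;>
      · rw [h1]
        push_cast
        grind
  simpa [AddMonoidHom.mem_ker] using hle hx

/-- Evaluating a lifted homomorphism on the boundary of a sum of simplices. -/
lemma lift_bdry {β : Type} [AddCommGroup β] (e : C(Δ k, X) → β) {N : ℕ}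
    (f : Fin N → C(Δ (k+1), X)) :
    FreeAbelianGroup.lift e (bdry X k (∑ j, FreeAbelianGroup.of (f j)))
      = ∑ j : Fin N, ∑ p : Fin (k+2),
          ((-1:ℤ)^(p:ℕ)) • e ((f j).comp (faceMap k p)) := by
  simp only [bdry, AddMonoidHom.finset_sum_apply, map_sum, AddMonoidHom.smul_apply,
    map_zsmul, FreeAbelianGroup.map_of_apply, FreeAbelianGroup.lift_apply_of, Finset.smul_sum]
  try rw [Finset.sum_comm]

/-- From a bijection between two disjoint finsets, a fixed-point-free involution. -/
lemma matching_even {α : Type} [DecidableEq α] (s₁ s₂ : Finset α)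
    (hd : ∀ c, ¬(c ∈ s₁ ∧ c ∈ s₂)) (hcard : s₁.card = s₂.card) :
    ∃ i : α → α, (∀ c ∈ s₁, i c ∈ s₂ ∧ i (i c) = c) ∧
      (∀ c ∈ s₂, i c ∈ s₁ ∧ i (i c) = c) := by
  classical
  let e := Finset.equivOfCardEq hcard
  refine ⟨fun c => if h : c ∈ s₁ then (e ⟨c, h⟩ : α) else
    if h : c ∈ s₂ then (e.symm ⟨c, h⟩ : α) else c, ?_, ?_⟩
  · intro c hc
    have h2 : (e ⟨c, hc⟩ : α) ∈ s₂ := (e ⟨c, hc⟩).2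
    refine ⟨by simp [hc, h2], ?_⟩
    have hn1 : (e ⟨c, hc⟩ : α) ∉ s₁ := fun h => hd _ ⟨h, h2⟩
    simp only [dif_pos hc, dif_neg hn1, dif_pos h2]
    rw [show (⟨(e ⟨c, hc⟩ : α), h2⟩ : {x // x ∈ s₂}) = e ⟨c, hc⟩ from Subtype.ext rfl,
      Equiv.symm_apply_apply]
  · intro c hc
    have hn1 : c ∉ s₁ := fun h => hd _ ⟨h, hc⟩
    have h1 : (e.symm ⟨c, hc⟩ : α) ∈ s₁ := (e.symm ⟨c, hc⟩).2
    refine ⟨by simp [hn1, hc, h1], ?_⟩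
    simp only [dif_neg hn1, dif_pos hc, dif_pos h1]
    rw [show (⟨(e.symm ⟨c, hc⟩ : α), h1⟩ : {x // x ∈ s₁}) = e.symm ⟨c, hc⟩ from Subtype.ext rfl,
      Equiv.apply_symm_apply]

/-- A finset of even cardinality has a fixed-point-free involution. -/
lemma matching_odd {α : Type} [DecidableEq α] (s : Finset α) (h : Even s.card) :
    ∃ i : α → α, ∀ c ∈ s, i c ∈ s ∧ i c ≠ c ∧ i (i c) = c := by
  classical
  obtain ⟨m, hm⟩ := h
  let e : {x // x ∈ s} ≃ (Fin m ⊕ Fin m) :=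
    (s.equivFin.trans (finCongr hm)).trans finSumFinEquiv.symm
  refine ⟨fun c => if h : c ∈ s then (e.symm ((Equiv.sumComm _ _) (e ⟨c, h⟩)) : α) else c,
    fun c hc => ?_⟩
  have hmem : (e.symm ((Equiv.sumComm _ _) (e ⟨c, hc⟩)) : α) ∈ s :=
    (e.symm ((Equiv.sumComm _ _) (e ⟨c, hc⟩))).2
  refine ⟨by simp [hc, hmem], ?_, ?_⟩
  · simp only [dif_pos hc]
    intro heq
    have : e.symm ((Equiv.sumComm _ _) (e ⟨c, hc⟩)) = ⟨c, hc⟩ := Subtype.ext heq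
    have h2 : (Equiv.sumComm (Fin m) (Fin m)) (e ⟨c, hc⟩) = e ⟨c, hc⟩ := by
      have := congrArg e this
      rwa [Equiv.apply_symm_apply] at this
    rcases hx : e ⟨c, hc⟩ with a | a <;> rw [hx] at h2 <;> simp at h2
  · simp only [dif_pos hc, dif_pos hmem]
    rw [show (⟨(e.symm ((Equiv.sumComm _ _) (e ⟨c, hc⟩)) : α), hmem⟩ : {x // x ∈ s})
        = e.symm ((Equiv.sumComm _ _) (e ⟨c, hc⟩)) from Subtype.ext rfl]
    simp

lemma count_eq_of_sum_zero {α : Type} [DecidableEq α] (s : Finset α) (t : α → ℤ)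
    (h1 : ∀ c ∈ s, t c = 1 ∨ t c = -1) (h0 : ∑ c ∈ s, t c = 0) :
    (s.filter fun c => t c = 1).card = (s.filter fun c => t c = -1).card := by
  classical
  have hsplit := Finset.sum_filter_add_sum_filter_not s (fun c => t c = 1) t
  have ha : ∑ c ∈ s.filter (fun c => t c = 1), t c
      = ((s.filter fun c => t c = 1).card : ℤ) := by
    rw [Finset.sum_congr rfl (fun c hc => (Finset.mem_filter.1 hc).2)]
    simp
  have hfneg : s.filter (fun c => ¬ t c = 1) = s.filter (fun c => t c = -1) :=
    Finset.filter_congr (fun c hc => by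
      rcases h1 c hc with h | h <;> simp [h])
  have hb : ∑ c ∈ s.filter (fun c => ¬ t c = 1), t c
      = -((s.filter fun c => t c = -1).card : ℤ) := by
    rw [hfneg, Finset.sum_congr rfl (fun c hc => (Finset.mem_filter.1 hc).2)]
    simp
  rw [ha, hb, h0] at hsplit
  omega


lemma negonepow (n : ℕ) : ((-1:ℤ))^n = 1 ∨ ((-1:ℤ))^n = -1 := by
  rcases Nat.even_or_odd n with h | h
  · exact Or.inl h.neg_one_pow
  · exact Or.inr h.neg_one_pow

variable {N : ℕ}

/-- The `(j,p)`-th codimension-one face of the collection. -/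
def Fc (f : Fin N → C(Δ (k+1), X)) (c : Fin N × Fin (k+2)) : C(Δ k, X) :=
  (f c.1).comp (faceMap k c.2)

/-- The matching condition for a pair of faces. -/
def Good (f : Fin N → C(Δ (k+1), X)) (c c' : Fin N × Fin (k+2)) : Prop :=
  ∃ τ : Equiv.Perm (Fin (k+1)), Fc f c' = ract (Fc f c) τ ∧
    (Equiv.Perm.sign τ : ℤ) = -(-1:ℤ)^((c.2:ℕ) + (c'.2:ℕ))

/-- The orbit class of an index. -/
def cls (f : Fin N → C(Δ (k+1), X)) (c₀ : Fin N × Fin (k+2)) :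
    Finset (Fin N × Fin (k+2)) :=
  Finset.univ.filter (fun c => OrbRel (Fc f c₀) (Fc f c))

lemma mem_cls {f : Fin N → C(Δ (k+1), X)} {c₀ c : Fin N × Fin (k+2)} :
    c ∈ cls f c₀ ↔ OrbRel (Fc f c₀) (Fc f c) := by
  simp [cls]

lemma cls_self (f : Fin N → C(Δ (k+1), X)) (c : Fin N × Fin (k+2)) :
    c ∈ cls f c := mem_cls.2 (OrbRel.rfl _)

lemma cls_eq {f : Fin N → C(Δ (k+1), X)} {c c' : Fin N × Fin (k+2)}
    (h : c' ∈ cls f c) : cls f c' = cls f c := by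
  have hr : OrbRel (Fc f c) (Fc f c') := mem_cls.1 h
  ext x
  rw [mem_cls, mem_cls]
  exact ⟨fun h2 => hr.trans h2, fun h2 => hr.symm.trans h2⟩

lemma match_exists (f : Fin N → C(Δ (k+1), X))
    (hcycle : bdry X k (∑ j, FreeAbelianGroup.of (f j)) ∈ Sprime X k)
    (c₀ : Fin N × Fin (k+2)) :
    ∃ i : Fin N × Fin (k+2) → Fin N × Fin (k+2),
      ∀ c ∈ cls f c₀, i c ∈ cls f c₀ ∧ i c ≠ c ∧ i (i c) = c ∧ Good f c (i c) := by
  classical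
  set g := Fc f c₀ with hgdef
  by_cases ho : OddOrb g
  · -- orbit with an odd stabilizer element: everything matches with everything
    have hGood : ∀ c ∈ cls f c₀, ∀ c' ∈ cls f c₀, Good f c c' := by
      intro c hc c' hc'
      obtain ⟨α, hα⟩ : OrbRel g (Fc f c) := mem_cls.1 hc
      obtain ⟨β, hβ⟩ : OrbRel g (Fc f c') := mem_cls.1 hc'
      obtain ⟨σ, hσ, hσs⟩ := ho
      have h0 : Fc f c' = ract (Fc f c) (α⁻¹ * β) := by
        rw [hα, hβ, ract_ract]
        congr 1
        group
      have h1 : Fc f c' = ract (Fc f c) (α⁻¹ * (σ * β)) := by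
        rw [hα, hβ, ract_ract]
        have h2 : α * (α⁻¹ * (σ * β)) = σ * β := by group
        rw [h2, ← ract_ract, hσ]
      have hs1 : Equiv.Perm.sign (α⁻¹ * (σ * β)) = - Equiv.Perm.sign (α⁻¹ * β) := by
        simp only [map_mul, map_inv, hσs]
        simp [mul_neg, neg_mul]
      rcases negonepow ((c.2:ℕ) + (c'.2:ℕ)) with hp | hp
      · -- need sign = -1
        rcases Int.units_eq_one_or (Equiv.Perm.sign (α⁻¹ * β)) with hs | hs
        · exact ⟨α⁻¹ * (σ * β), h1, by rw [hs1, hs, hp]; simp⟩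
        · exact ⟨α⁻¹ * β, h0, by rw [hs, hp]; simp⟩
      · -- need sign = 1
        rcases Int.units_eq_one_or (Equiv.Perm.sign (α⁻¹ * β)) with hs | hs
        · exact ⟨α⁻¹ * β, h0, by rw [hs, hp]; simp⟩
        · exact ⟨α⁻¹ * (σ * β), h1, by rw [hs1, hs, hp]; simp⟩
    -- the class has even cardinality
    have hpsi := psi_sprime g hcycle
    unfold psi at hpsi
    rw [lift_bdry (ind g) f] at hpsi
    have hsmul : ∀ (n : ℕ) (x : ZMod 2), ((-1:ℤ)^n) • x = x := by
      intro n x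
      rcases negonepow n with h | h <;> rw [h] <;> simp [CharTwo.neg_eq]
    simp only [hsmul] at hpsi
    have hcard2 : ((cls f c₀).card : ZMod 2) = 0 := by
      have hx : ((cls f c₀).card : ZMod 2)
          = ∑ c : Fin N × Fin (k+2), ind g (Fc f c) := by
        unfold ind
        rw [Finset.sum_boole]
        norm_cast
      rw [hx, Fintype.sum_prod_type]
      exact hpsi
    have hcard : Even (cls f c₀).card := by
      have h2 : (2 : ℕ) ∣ (cls f c₀).card := by
        exact (ZMod.natCast_eq_zero_iff _ 2).1 hcard2
      exact even_iff_two_dvd.2 h2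
    obtain ⟨i, hi⟩ := matching_odd (cls f c₀) hcard
    exact ⟨i, fun c hc => ⟨(hi c hc).1, (hi c hc).2.1, (hi c hc).2.2,
      hGood c hc (i c) (hi c hc).1⟩⟩
  · -- no odd stabilizer: use the sign homomorphism
    have hphi := phi_sprime ho hcycle
    unfold phi at hphi
    rw [lift_bdry (eps g) f] at hphi
    set t : Fin N × Fin (k+2) → ℤ := fun c => (-1:ℤ)^(c.2:ℕ) * eps g (Fc f c) with ht
    have hsum0 : ∑ c : Fin N × Fin (k+2), t c = 0 := by
      rw [Fintype.sum_prod_type]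
      simpa [smul_eq_mul, ht, Fc] using hphi
    have htpm : ∀ c ∈ cls f c₀, t c = 1 ∨ t c = -1 := by
      intro c hc
      rcases negonepow (c.2:ℕ) with h1 | h1 <;>
        rcases eps_pm (mem_cls.1 hc) with h2 | h2 <;>
          simp [ht, h1, h2, hgdef]
    have htz : ∀ c ∉ cls f c₀, t c = 0 := by
      intro c hc
      rw [ht]
      simp only
      rw [eps_of_not_rel (fun hr => hc (mem_cls.2 hr)), mul_zero]
    have hsum : ∑ c ∈ cls f c₀, t c = 0 := by
      rw [← hsum0]
      exact (Finset.sum_subset (Finset.subset_univ _)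
        (fun c _ hc => htz c hc)).symm ▸ rfl
    have hcount := count_eq_of_sum_zero (cls f c₀) t htpm hsum
    have hdisj : ∀ c, ¬(c ∈ (cls f c₀).filter (fun c => t c = 1) ∧
        c ∈ (cls f c₀).filter (fun c => t c = -1)) := by
      rintro c ⟨h1, h2⟩
      have e1 := (Finset.mem_filter.1 h1).2
      have e2 := (Finset.mem_filter.1 h2).2
      omega
    obtain ⟨i, hi1, hi2⟩ := matching_even _ _ hdisj hcount
    have key : ∀ c c', OrbRel g (Fc f c) → OrbRel g (Fc f c') →
        t c * t c' = -1 → Good f c c' := by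
      intro c c' hc hc' hprod
      obtain ⟨α, hα⟩ := hc
      obtain ⟨β, hβ⟩ := hc'
      refine ⟨α⁻¹ * β, by rw [hα, hβ, ract_ract]; congr 1; group, ?_⟩
      have ha := eps_eq ho hα
      have hb := eps_eq ho hβ
      rw [ht] at hprod
      simp only [ha, hb] at hprod
      have hmul : (Equiv.Perm.sign (α⁻¹ * β) : ℤ)
          = (Equiv.Perm.sign α : ℤ) * (Equiv.Perm.sign β : ℤ) := by
        rcases Int.units_eq_one_or (Equiv.Perm.sign α) with h | h <;>
          simp [map_mul, map_inv, h]
      have ha2 : (Equiv.Perm.sign α : ℤ) = 1 ∨ (Equiv.Perm.sign α : ℤ) = -1 := by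
        rcases Int.units_eq_one_or (Equiv.Perm.sign α) with h | h <;> simp [h]
      have hb2 : (Equiv.Perm.sign β : ℤ) = 1 ∨ (Equiv.Perm.sign β : ℤ) = -1 := by
        rcases Int.units_eq_one_or (Equiv.Perm.sign β) with h | h <;> simp [h]
      rw [pow_add, hmul]
      rcases negonepow (c.2:ℕ) with hA | hA <;>
        rcases negonepow (c'.2:ℕ) with hB | hB <;>
          rcases ha2 with h1 | h1 <;> rcases hb2 with h2 | h2 <;>
            rw [hA, hB, h1, h2] at hprod ⊢ <;> omega
    refine ⟨i, fun c hc => ?_⟩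
    rcases htpm c hc with hct | hct
    · have hcs : c ∈ (cls f c₀).filter (fun c => t c = 1) :=
        Finset.mem_filter.2 ⟨hc, hct⟩
      obtain ⟨hmem, hinv⟩ := hi1 c hcs
      have hic : i c ∈ cls f c₀ := (Finset.mem_filter.1 hmem).1
      have hit : t (i c) = -1 := (Finset.mem_filter.1 hmem).2
      refine ⟨hic, fun he => ?_, hinv, key c (i c) (mem_cls.1 hc) (mem_cls.1 hic)
        (by rw [hct, hit]; ring)⟩
      rw [he] at hit
      omega
    · have hcs : c ∈ (cls f c₀).filter (fun c => t c = -1) :=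
        Finset.mem_filter.2 ⟨hc, hct⟩
      obtain ⟨hmem, hinv⟩ := hi2 c hcs
      have hic : i c ∈ cls f c₀ := (Finset.mem_filter.1 hmem).1
      have hit : t (i c) = 1 := (Finset.mem_filter.1 hmem).2
      refine ⟨hic, fun he => ?_, hinv, key c (i c) (mem_cls.1 hc) (mem_cls.1 hic)
        (by rw [hct, hit]; ring)⟩
      rw [he] at hit
      omega


end FacePairingAux

set_option maxHeartbeats 1600000 in
/-- (Here the pseudocycle dimension `k ≥ 1` of the statement is
written as `k+1`, so the simplices are `(k+1)`-dimensional, faces are indexed by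
`Fin (k+2)` and face-identifying permutations lie in `Sym({0,…,k}) = Perm (Fin (k+1))`.)
If `s = f_1 + ⋯ + f_N` is a sum of singular `(k+1)`-simplices whose image in the
quotient complex `S̄_{k+1}(X) = S_{k+1}(X)/S'_{k+1}(X)` is a cycle, then there are a
symmetric subset `D` of pairs of indices `(j,p)` disjoint from the diagonal, whose
projections to the index set are bijections, and permutations `τ` attached to the
elements of `D`, matching the codimension-one faces in pairs with the stated
compatibility of maps and signs. -/
theorem cycle_face_pairing (X : Type) [TopologicalSpace X] (k N : ℕ) (hN : 1 ≤ N)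
    (f : Fin N → C(Δ (k+1), X))
    (hcycle : bdry X k (∑ j, FreeAbelianGroup.of (f j)) ∈ Sprime X k) :
    ∃ (D : Set ((Fin N × Fin (k+2)) × (Fin N × Fin (k+2))))
      (τ : (Fin N × Fin (k+2)) → (Fin N × Fin (k+2)) → Equiv.Perm (Fin (k+1))),
      -- disjoint from the diagonal
      (∀ c, (c, c) ∉ D) ∧
      -- symmetric
      (∀ c c', (c, c') ∈ D → (c', c) ∈ D) ∧
      -- the projection on either coordinate is a bijection
      (∀ c, ∃! c', (c, c') ∈ D) ∧ (∀ c', ∃! c, (c, c') ∈ D) ∧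
      -- the face-matching conditions
      (∀ j₁ p₁ j₂ p₂, ((j₁, p₁), (j₂, p₂)) ∈ D →
        τ (j₂, p₂) (j₁, p₁) = (τ (j₁, p₁) (j₂, p₂))⁻¹ ∧
        (f j₂).comp (faceMap k p₂) =
          ((f j₁).comp (faceMap k p₁)).comp (permMap k (τ (j₁, p₁) (j₂, p₂))) ∧
        (Equiv.Perm.sign (τ (j₁, p₁) (j₂, p₂)) : ℤ) = -(-1 : ℤ)^((p₁ : ℕ) + (p₂ : ℕ))) := by
  classical
  -- a global fixed-point-free involution matching faces, built from per-class matchings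
  let P : Finset (Fin N × Fin (k+2)) → ((Fin N × Fin (k+2)) → (Fin N × Fin (k+2))) → Prop :=
    fun s i => ∀ c ∈ s, i c ∈ s ∧ i c ≠ c ∧ i (i c) = c ∧ Good f c (i c)
  let M : Finset (Fin N × Fin (k+2)) → (Fin N × Fin (k+2)) → (Fin N × Fin (k+2)) :=
    fun s => if h : ∃ i, P s i then h.choose else id
  have hM : ∀ c₀, P (cls f c₀) (M (cls f c₀)) := by
    intro c₀
    have h : ∃ i, P (cls f c₀) i := match_exists f hcycle c₀
    simp only [M, dif_pos h]
    exact h.choose_spec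
  let I : (Fin N × Fin (k+2)) → (Fin N × Fin (k+2)) := fun c => M (cls f c) c
  have hI : ∀ c, I c ∈ cls f c ∧ I c ≠ c ∧ Good f c (I c) := by
    intro c
    obtain ⟨h1, h2, _, h4⟩ := hM c c (cls_self f c)
    exact ⟨h1, h2, h4⟩
  have hII : ∀ c, I (I c) = c := by
    intro c
    have h1 : I c ∈ cls f c := (hI c).1
    have he : I (I c) = M (cls f c) (I c) := by
      simp only [I]
      rw [cls_eq h1]
    rw [he]
    exact (hM c c (cls_self f c)).2.2.1
  -- the permutation attached to a matched pair
  let pick : (Fin N × Fin (k+2)) → (Fin N × Fin (k+2)) → Equiv.Perm (Fin (k+1)) :=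
    fun a b => if h : Good f a b then h.choose else 1
  have pick_spec : ∀ a b, Good f a b →
      Fc f b = ract (Fc f a) (pick a b) ∧
      (Equiv.Perm.sign (pick a b) : ℤ) = -(-1:ℤ)^((a.2:ℕ) + (b.2:ℕ)) := by
    intro a b h
    simp only [pick, dif_pos h]
    exact h.choose_spec
  let enc : (Fin N × Fin (k+2)) → ℕ := fun c => (finProdFinEquiv c : ℕ)
  have enc_inj : ∀ a b, enc a = enc b → a = b := by
    intro a b h
    exact finProdFinEquiv.injective (Fin.val_injective h)
  refine ⟨{q | q.2 = I q.1},
    fun a b => if enc a ≤ enc b then pick a b else (pick b a)⁻¹, ?_, ?_, ?_, ?_, ?_⟩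
  · intro c hc
    exact (hI c).2.1 (Set.mem_setOf.1 hc).symm
  · intro c c' hc
    have h1 : c' = I c := hc
    show c = I c'
    rw [h1]
    exact (hII c).symm
  · intro c
    exact ⟨I c, rfl, fun y hy => hy⟩
  · intro c'
    refine ⟨I c', (hII c').symm, ?_⟩
    intro y hy
    have hy' : c' = I y := hy
    rw [hy']
    exact (hII y).symm
  · intro j₁ p₁ j₂ p₂ hD
    have h2 : (j₂, p₂) = I (j₁, p₁) := hD
    have h1 : (j₁, p₁) = I (j₂, p₂) := by rw [h2]; exact (hII (j₁, p₁)).symm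
    have hne : (j₁, p₁) ≠ (j₂, p₂) := fun he =>
      (hI (j₁, p₁)).2.1 (by rw [← h2]; exact he.symm)
    have hG12 : Good f (j₁, p₁) (j₂, p₂) := h2 ▸ (hI (j₁, p₁)).2.2
    have hG21 : Good f (j₂, p₂) (j₁, p₁) := h1 ▸ (hI (j₂, p₂)).2.2
    dsimp only
    by_cases hle : enc (j₁, p₁) ≤ enc (j₂, p₂)
    · have hlt : ¬ enc (j₂, p₂) ≤ enc (j₁, p₁) := fun h =>
        hne (enc_inj _ _ (le_antisymm hle h))
      obtain ⟨hf, hs⟩ := pick_spec (j₁, p₁) (j₂, p₂) hG12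
      rw [if_pos hle, if_neg hlt]
      exact ⟨rfl, hf, hs⟩
    · have hle' : enc (j₂, p₂) ≤ enc (j₁, p₁) := le_of_not_ge hle
      obtain ⟨hf, hs⟩ := pick_spec (j₂, p₂) (j₁, p₁) hG21
      rw [if_neg hle, if_pos hle']
      refine ⟨(inv_inv _).symm, ?_, ?_⟩
      · show Fc f (j₂, p₂) = ract (Fc f (j₁, p₁)) (pick (j₂, p₂) (j₁, p₁))⁻¹
        rw [hf, ract_ract, mul_inv_cancel, ract_one]
      · have hinv : (Equiv.Perm.sign (pick (j₂, p₂) (j₁, p₁))⁻¹ : ℤ)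
            = (Equiv.Perm.sign (pick (j₂, p₂) (j₁, p₁)) : ℤ) := by
          rcases Int.units_eq_one_or (Equiv.Perm.sign (pick (j₂, p₂) (j₁, p₁))) with h | h <;>
            simp [map_inv, h]
        rw [hinv, hs, add_comm]
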